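/- Let n ≥ 3. A pair (λ^0, λ^1) of nonzero vectors in k^{n−1} satisfies equations (A) and (B) (the only conditions arising for d = 2) if and only if there exists an index i with 1 ≤ i ≤ n−1 such that either the support of λ^0 equals {i} and the support of λ^1 is contained in {i−1, i+1} ∩ {1, …, n−1}, or the support of λ^1 equals {i} and the support of λ^0 is contained in {i−1, i+1} ∩ {1, …, n−1}. In particular, for n = 3 the solutions up to rescaling each vector are exactly the two pairs (e_1, e_2) and (e_2, e_1). -/
import Mathlib


/-- For `n ≥ 3`, a pair `(λ^0, λ^1)` of nonzero vectors in `k^{n-1}` (recorded as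
functions `ℕ → k` with only entries `1 ≤ i ≤ n - 1` relevant) satisfies equations (A)
and (B) iff for some index `1 ≤ i ≤ n - 1`, one of the vectors has support exactly
`{i}` and the other has support contained in `{i-1, i+1} ∩ {1, …, n-1}`. In particular,
for `n = 3` the solutions up to rescaling are exactly `(e_1, e_2)` and `(e_2, e_1)`. -/
theorem nilCoxeter_two_truncated_point_modules
    (k : Type*) [Field k] [IsAlgClosed k] (n : ℕ) (hn : 3 ≤ n)
    (lam0 lam1 : ℕ → k)
    (h0 : ∃ i, 1 ≤ i ∧ i ≤ n - 1 ∧ lam0 i ≠ 0)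
    (h1 : ∃ i, 1 ≤ i ∧ i ≤ n - 1 ∧ lam1 i ≠ 0) :
    (((∀ i, 1 ≤ i → i ≤ n - 1 → lam1 i * lam0 i = 0) ∧
      (∀ i j, 1 ≤ i → i ≤ n - 1 → 1 ≤ j → j ≤ n - 1 → (i + 1 < j ∨ j + 1 < i) →
        lam1 i * lam0 j - lam1 j * lam0 i = 0)) ↔
      (∃ i, 1 ≤ i ∧ i ≤ n - 1 ∧
        ((lam0 i ≠ 0 ∧ (∀ p, 1 ≤ p → p ≤ n - 1 → p ≠ i → lam0 p = 0) ∧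
            (∀ p, 1 ≤ p → p ≤ n - 1 → p ≠ i - 1 → p ≠ i + 1 → lam1 p = 0)) ∨
          (lam1 i ≠ 0 ∧ (∀ p, 1 ≤ p → p ≤ n - 1 → p ≠ i → lam1 p = 0) ∧
            (∀ p, 1 ≤ p → p ≤ n - 1 → p ≠ i - 1 → p ≠ i + 1 → lam0 p = 0))))) ∧
    (n = 3 →
      (((∀ i, 1 ≤ i → i ≤ n - 1 → lam1 i * lam0 i = 0) ∧
        (∀ i j, 1 ≤ i → i ≤ n - 1 → 1 ≤ j → j ≤ n - 1 → (i + 1 < j ∨ j + 1 < i) →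
          lam1 i * lam0 j - lam1 j * lam0 i = 0)) ↔
        ((lam0 1 ≠ 0 ∧ lam0 2 = 0 ∧ lam1 1 = 0 ∧ lam1 2 ≠ 0) ∨
          (lam0 1 = 0 ∧ lam0 2 ≠ 0 ∧ lam1 1 ≠ 0 ∧ lam1 2 = 0)))) := by
  have main : ((∀ i, 1 ≤ i → i ≤ n - 1 → lam1 i * lam0 i = 0) ∧
      (∀ i j, 1 ≤ i → i ≤ n - 1 → 1 ≤ j → j ≤ n - 1 → (i + 1 < j ∨ j + 1 < i) →
        lam1 i * lam0 j - lam1 j * lam0 i = 0)) ↔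
      (∃ i, 1 ≤ i ∧ i ≤ n - 1 ∧
        ((lam0 i ≠ 0 ∧ (∀ p, 1 ≤ p → p ≤ n - 1 → p ≠ i → lam0 p = 0) ∧
            (∀ p, 1 ≤ p → p ≤ n - 1 → p ≠ i - 1 → p ≠ i + 1 → lam1 p = 0)) ∨
          (lam1 i ≠ 0 ∧ (∀ p, 1 ≤ p → p ≤ n - 1 → p ≠ i → lam1 p = 0) ∧
            (∀ p, 1 ≤ p → p ≤ n - 1 → p ≠ i - 1 → p ≠ i + 1 → lam0 p = 0)))) := by
    constructor
    · rintro ⟨hA, hB⟩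
      -- adjacency: support points of lam0 and lam1 differ by exactly 1
      have adj : ∀ a b, 1 ≤ a → a ≤ n - 1 → 1 ≤ b → b ≤ n - 1 →
          lam0 a ≠ 0 → lam1 b ≠ 0 → (b = a + 1 ∨ a = b + 1) := by
        intro a b ha1 ha2 hb1 hb2 h0a h1b
        have h1a : lam1 a = 0 := by
          rcases mul_eq_zero.mp (hA a ha1 ha2) with h | h
          · exact h
          · exact absurd h h0a
        have hab : a ≠ b := fun h => h1b (h ▸ h1a)
        by_contra hcon
        push_neg at hcon
        have hfar : b + 1 < a ∨ a + 1 < b := by omega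
        have := hB b a hb1 hb2 ha1 ha2 (by omega)
        rw [h1a, zero_mul, sub_zero] at this
        rcases mul_eq_zero.mp this with h | h
        · exact h1b h
        · exact h0a h
      obtain ⟨a, ha1, ha2, h0a⟩ := h0
      obtain ⟨b, hb1, hb2, h1b⟩ := h1
      by_cases hsing : ∀ p, 1 ≤ p → p ≤ n - 1 → p ≠ a → lam0 p = 0
      · refine ⟨a, ha1, ha2, Or.inl ⟨h0a, hsing, ?_⟩⟩
        intro p hp1 hp2 hpm hpp
        by_contra h1p
        have := adj a p ha1 ha2 hp1 hp2 h0a h1p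
        omega
      · push_neg at hsing
        obtain ⟨a', ha'1, ha'2, ha'ne, h0a'⟩ := hsing
        refine ⟨b, hb1, hb2, Or.inr ⟨h1b, ?_, ?_⟩⟩
        · intro p hp1 hp2 hpne
          by_contra h1p
          have e1 := adj a p ha1 ha2 hp1 hp2 h0a h1p
          have e2 := adj a' p ha'1 ha'2 hp1 hp2 h0a' h1p
          have e3 := adj a b ha1 ha2 hb1 hb2 h0a h1b
          have e4 := adj a' b ha'1 ha'2 hb1 hb2 h0a' h1b
          omega
        · intro p hp1 hp2 hpm hpp
          by_contra h0p
          have := adj p b hp1 hp2 hb1 hb2 h0p h1b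
          omega
    · rintro ⟨i, hi1, hi2, hcase⟩
      rcases hcase with ⟨h0i, hs0, hs1⟩ | ⟨h1i, hs1, hs0⟩
      · have key : ∀ p q, 1 ≤ p → p ≤ n - 1 → 1 ≤ q → q ≤ n - 1 →
            (p + 1 < q ∨ q + 1 < p) → lam1 p * lam0 q = 0 := by
          intro p q hp1 hp2 hq1 hq2 hfar
          by_cases hq : q = i
          · subst hq
            rw [hs1 p hp1 hp2 (by omega) (by omega), zero_mul]
          · rw [hs0 q hq1 hq2 hq, mul_zero]
        constructor
        · intro p hp1 hp2
          by_cases hp : p = i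
          · subst hp
            rw [hs1 p hi1 hi2 (by omega) (by omega), zero_mul]
          · rw [hs0 p hp1 hp2 hp, mul_zero]
        · intro p q hp1 hp2 hq1 hq2 hfar
          rw [key p q hp1 hp2 hq1 hq2 hfar, key q p hq1 hq2 hp1 hp2 (by omega),
            sub_zero]
      · have key : ∀ p q, 1 ≤ p → p ≤ n - 1 → 1 ≤ q → q ≤ n - 1 →
            (p + 1 < q ∨ q + 1 < p) → lam1 p * lam0 q = 0 := by
          intro p q hp1 hp2 hq1 hq2 hfar
          by_cases hp : p = i
          · subst hp
            rw [hs0 q hq1 hq2 (by omega) (by omega), mul_zero]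
          · rw [hs1 p hp1 hp2 hp, zero_mul]
        constructor
        · intro p hp1 hp2
          by_cases hp : p = i
          · subst hp
            rw [hs0 p hi1 hi2 (by omega) (by omega), mul_zero]
          · rw [hs1 p hp1 hp2 hp, zero_mul]
        · intro p q hp1 hp2 hq1 hq2 hfar
          rw [key p q hp1 hp2 hq1 hq2 hfar, key q p hq1 hq2 hp1 hp2 (by omega),
            sub_zero]
  refine ⟨main, ?_⟩
  intro hn3
  subst hn3
  rw [main]
  constructor
  · rintro ⟨i, hi1, hi2, hcase⟩
    obtain ⟨a, ha1, ha2, h0a⟩ := h0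
    obtain ⟨b, hb1, hb2, h1b⟩ := h1
    have hi : i = 1 ∨ i = 2 := by omega
    have hav : a = 1 ∨ a = 2 := by omega
    have hbv : b = 1 ∨ b = 2 := by omega
    rcases hcase with ⟨h0i, hs0, hs1⟩ | ⟨h1i, hs1, hs0⟩
    · rcases hi with rfl | rfl
      · left
        have e1 : lam0 2 = 0 := hs0 2 (by norm_num) (by norm_num) (by norm_num)
        have e2 : lam1 1 = 0 := hs1 1 (by norm_num) (by norm_num) (by norm_num) (by norm_num)
        refine ⟨h0i, e1, e2, ?_⟩
        rcases hbv with rfl | rfl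
        · exact absurd e2 h1b
        · exact h1b
      · right
        have e1 : lam0 1 = 0 := hs0 1 (by norm_num) (by norm_num) (by norm_num)
        have e2 : lam1 2 = 0 := hs1 2 (by norm_num) (by norm_num) (by norm_num) (by norm_num)
        refine ⟨e1, h0i, ?_, e2⟩
        rcases hbv with rfl | rfl
        · exact h1b
        · exact absurd e2 h1b
    · rcases hi with rfl | rfl
      · right
        have e1 : lam1 2 = 0 := hs1 2 (by norm_num) (by norm_num) (by norm_num)
        have e2 : lam0 1 = 0 := hs0 1 (by norm_num) (by norm_num) (by norm_num) (by norm_num)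
        refine ⟨e2, ?_, h1i, e1⟩
        rcases hav with rfl | rfl
        · exact absurd e2 h0a
        · exact h0a
      · left
        have e1 : lam1 1 = 0 := hs1 1 (by norm_num) (by norm_num) (by norm_num)
        have e2 : lam0 2 = 0 := hs0 2 (by norm_num) (by norm_num) (by norm_num) (by norm_num)
        refine ⟨?_, e2, e1, h1i⟩
        rcases hav with rfl | rfl
        · exact h0a
        · exact absurd e2 h0a
  · rintro (⟨e1, e2, e3, e4⟩ | ⟨e1, e2, e3, e4⟩)
    · refine ⟨1, by norm_num, by norm_num, Or.inl ⟨e1, ?_, ?_⟩⟩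
      · intro p hp1 hp2 hpne
        have : p = 2 := by omega
        exact this ▸ e2
      · intro p hp1 hp2 hpm hpp
        have : p = 1 := by omega
        exact this ▸ e3
    · refine ⟨2, by norm_num, by norm_num, Or.inl ⟨e2, ?_, ?_⟩⟩
      · intro p hp1 hp2 hpne
        have : p = 1 := by omega
        exact this ▸ e1
      · intro p hp1 hp2 hpm hpp
        have : p = 2 := by omega
        exact this ▸ e4
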